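/- Let T be a finite rooted tree with vertex set V, root r, and parent function p, and let a : V → ℝ with a ≥ 0. Then the dual LP of the ℓ1-SBHSP problem admits an integral optimal solution: there exists a dual-feasible pair (α, β) with α taking non-negative integer values and β_v ∈ {−1, 0, 1} for every v, such that ∑_v a_v β_v ≥ ∑_v a_v β'_v for every dual-feasible pair (α', β'). -/

import Mathlib

open Finset
open scoped Classical

/-- A finite rooted tree: a distinguished root and a parent function under which
every vertex eventually reaches the root. -/
structure SBHTree (V : Type*) [Fintype V] [DecidableEq V] where
  root : V
  parent : V → V
  parent_root : parent root = root
  reaches_root : ∀ v : V, ∃ n : ℕ, parent^[n] v = root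

/-- The set of children of a vertex `v`. -/
def SBHTree.children {V : Type*} [Fintype V] [DecidableEq V]
    (T : SBHTree V) (v : V) : Finset V :=
  univ.filter (fun u => u ≠ T.root ∧ T.parent u = v)

/-- An assignment is feasible if it is non-negative and the value at each vertex is
at least the sum of the values at its children. -/
def SBHTree.Feasible {V : Type*} [Fintype V] [DecidableEq V]
    (T : SBHTree V) (x : V → ℝ) : Prop :=
  (∀ v, 0 ≤ x v) ∧ ∀ v, (∑ u ∈ T.children v, x u) ≤ x v


/-- Dual feasibility for the ℓ1-SBHSP LP on a rooted tree: `α ≥ 0`,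
`−1 ≤ β ≤ 1`, `β v + α v − α (p v) ≤ 0` for every non-root `v`, and
`β r + α r ≤ 0` at the root `r`. -/
def SBHTree.DualFeasible {V : Type*} [Fintype V] [DecidableEq V]
    (T : SBHTree V) (α β : V → ℝ) : Prop :=
  (∀ v, 0 ≤ α v) ∧ (∀ v, -1 ≤ β v ∧ β v ≤ 1) ∧
    (∀ v, v ≠ T.root → β v + α v - α (T.parent v) ≤ 0) ∧
    β T.root + α T.root ≤ 0

open MeasureTheory

/-- min 1 is affine on [k, k+1]. -/
lemma min_affine (k : ℤ) (y : ℝ) (h1 : (k:ℝ) ≤ y) (h2 : y ≤ (k:ℝ) + 1) :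
    min 1 y = min 1 (k:ℝ) + (min 1 ((k:ℝ)+1) - min 1 (k:ℝ)) * (y - k) := by
  rcases le_or_gt 1 (k:ℝ) with h | h
  · rw [min_eq_left h, min_eq_left (by linarith), min_eq_left (by linarith)]; ring
  · have hk : (k:ℝ) + 1 ≤ 1 := by
      have : k + 1 ≤ 1 := by exact_mod_cast Int.add_one_le_iff.mpr (by exact_mod_cast h)
      exact_mod_cast this
    rw [min_eq_right h.le, min_eq_right hk, min_eq_right (by linarith)]; ring

lemma floor_diff_bounds (x y θ : ℝ) :
    ⌊x - y⌋ ≤ ⌊x + θ⌋ - ⌊y + θ⌋ ∧ ⌊x + θ⌋ - ⌊y + θ⌋ ≤ ⌊x - y⌋ + 1 := by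
  have h1 : (⌊x + θ⌋ : ℝ) ≤ x + θ := Int.floor_le _
  have h2 : x + θ < ⌊x + θ⌋ + 1 := Int.lt_floor_add_one _
  have h3 : (⌊y + θ⌋ : ℝ) ≤ y + θ := Int.floor_le _
  have h4 : y + θ < ⌊y + θ⌋ + 1 := Int.lt_floor_add_one _
  have h5 : (⌊x - y⌋ : ℝ) ≤ x - y := Int.floor_le _
  have h6 : x - y < ⌊x - y⌋ + 1 := Int.lt_floor_add_one _
  constructor
  · have : (⌊x - y⌋ : ℝ) - 1 < ⌊x + θ⌋ - ⌊y + θ⌋ := by linarith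
    have := Int.lt_iff_add_one_le.mp (by exact_mod_cast this)
    omega
  · have : (⌊x + θ⌋ : ℝ) - ⌊y + θ⌋ < ⌊x - y⌋ + 2 := by linarith
    have := Int.lt_iff_add_one_le.mp (by exact_mod_cast this)
    omega

lemma aux_floor_integral (x : ℝ) :
    IntegrableOn (fun θ : ℝ => ((⌊x + θ⌋ : ℤ) : ℝ)) (Set.Ioo 0 1) ∧
      ∫ θ in Set.Ioo (0:ℝ) 1, ((⌊x + θ⌋ : ℤ) : ℝ) = x := by
  set c : ℝ := 1 - Int.fract x with hc
  have hf0 : 0 ≤ Int.fract x := Int.fract_nonneg x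
  have hf1 : Int.fract x < 1 := Int.fract_lt_one x
  have hx : (⌊x⌋ : ℝ) + Int.fract x = x := Int.floor_add_fract x
  have hc0 : 0 < c := by simp only [hc]; linarith
  have hc1 : c ≤ 1 := by simp only [hc]; linarith
  have heq : Set.EqOn (fun θ : ℝ => ((⌊x + θ⌋ : ℤ) : ℝ))
      (fun θ => ((⌊x⌋ : ℝ)) + Set.indicator (Set.Ici c) (fun _ => (1:ℝ)) θ) (Set.Ioo 0 1) := by
    intro θ hθ
    obtain ⟨hθ0, hθ1⟩ := hθ
    by_cases h : c ≤ θ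
    · have h1 : ⌊x + θ⌋ = ⌊x⌋ + 1 := by
        rw [Int.floor_eq_iff]
        constructor
        · push_cast; linarith
        · push_cast; linarith
      simp [h1, Set.indicator_of_mem (Set.mem_Ici.mpr h)]
    · have h1 : ⌊x + θ⌋ = ⌊x⌋ := by
        rw [Int.floor_eq_iff]
        constructor
        · linarith
        · push_cast; linarith [not_le.mp h]
      simp [h1, Set.indicator_of_notMem (fun hm => h (Set.mem_Ici.mp hm))]
  have hindint : IntegrableOn
      (fun θ => ((⌊x⌋ : ℝ)) + Set.indicator (Set.Ici c) (fun _ => (1:ℝ)) θ) (Set.Ioo 0 1) := by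
    apply Integrable.add
    · exact integrableOn_const measure_Ioo_lt_top.ne
    · exact (integrableOn_const measure_Ioo_lt_top.ne).indicator measurableSet_Ici
  have hii : IntegrableOn (fun θ : ℝ => ((⌊x + θ⌋ : ℤ) : ℝ)) (Set.Ioo 0 1) :=
    hindint.congr_fun heq.symm measurableSet_Ioo
  refine ⟨hii, ?_⟩
  rw [setIntegral_congr_fun measurableSet_Ioo heq]
  rw [integral_add (show Integrable (fun _ : ℝ => (⌊x⌋ : ℝ)) (volume.restrict (Set.Ioo (0:ℝ) 1)) from
      integrableOn_const measure_Ioo_lt_top.ne)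
    (show Integrable (Set.indicator (Set.Ici c) (fun _ => (1:ℝ))) (volume.restrict (Set.Ioo (0:ℝ) 1)) from
      (integrableOn_const measure_Ioo_lt_top.ne).indicator measurableSet_Ici)]
  rw [setIntegral_const, setIntegral_indicator measurableSet_Ici, setIntegral_const]
  simp only [measureReal_def]
  have hset : Set.Ioo (0:ℝ) 1 ∩ Set.Ici c = Set.Ico c 1 := by
    ext θ
    simp only [Set.mem_inter_iff, Set.mem_Ioo, Set.mem_Ici, Set.mem_Ico]
    constructor
    · rintro ⟨⟨_, h1⟩, h2⟩; exact ⟨h2, h1⟩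
    · rintro ⟨h1, h2⟩; exact ⟨⟨lt_of_lt_of_le hc0 h1, h2⟩, h1⟩
  rw [hset, Real.volume_Ioo, Real.volume_Ico]
  rw [ENNReal.toReal_ofReal (by norm_num), ENNReal.toReal_ofReal (by linarith)]
  simp only [smul_eq_mul, hc]
  linarith

lemma aux_combo (x y C1 C2 C3 : ℝ) :
    MeasureTheory.IntegrableOn
      (fun θ : ℝ => C1 + C2 * (((⌊x + θ⌋ : ℤ) : ℝ) - ((⌊y + θ⌋ : ℤ) : ℝ) - C3)) (Set.Ioo 0 1) ∧
    ∫ θ in Set.Ioo (0:ℝ) 1, (C1 + C2 * (((⌊x + θ⌋ : ℤ) : ℝ) - ((⌊y + θ⌋ : ℤ) : ℝ) - C3))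
      = C1 + C2 * (x - y - C3) := by
  have h1 := (aux_floor_integral x).1
  have h2 := (aux_floor_integral y).1
  have hconst : ∀ C : ℝ, MeasureTheory.IntegrableOn (fun _ : ℝ => C) (Set.Ioo (0:ℝ) 1) :=
    fun C => MeasureTheory.integrableOn_const measure_Ioo_lt_top.ne
  have h3 : MeasureTheory.IntegrableOn
      (fun θ : ℝ => ((⌊x + θ⌋ : ℤ) : ℝ) - ((⌊y + θ⌋ : ℤ) : ℝ) - C3) (Set.Ioo 0 1) := by
    exact (h1.sub h2).sub (hconst C3)
  have h4 : MeasureTheory.IntegrableOn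
      (fun θ : ℝ => C2 * (((⌊x + θ⌋ : ℤ) : ℝ) - ((⌊y + θ⌋ : ℤ) : ℝ) - C3)) (Set.Ioo 0 1) := by
    exact h3.const_mul C2
  constructor
  · exact (hconst C1).add h4
  · have h5 : MeasureTheory.IntegrableOn
        (fun θ : ℝ => ((⌊x + θ⌋ : ℤ) : ℝ) - ((⌊y + θ⌋ : ℤ) : ℝ)) (Set.Ioo 0 1) := by
      exact h1.sub h2
    rw [MeasureTheory.integral_add (hconst C1) h4, MeasureTheory.integral_const_mul,
      MeasureTheory.integral_sub h5 (hconst C3),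
      MeasureTheory.integral_sub h1 h2,
      (aux_floor_integral x).2, (aux_floor_integral y).2,
      MeasureTheory.setIntegral_const, MeasureTheory.setIntegral_const]
    rw [measureReal_def, Real.volume_Ioo]
    norm_num


/-- The dual LP of the ℓ1-SBHSP problem on a finite rooted tree
with non-negative targets admits an integral optimal solution: a dual-feasible
pair `(α, β)` with `α` taking non-negative integer values and
`β v ∈ {−1, 0, 1}` for every `v`, whose dual objective `∑ v, a v * β v` is at
least that of every dual-feasible pair. -/
theorem stmt_13 {V : Type*} [Fintype V] [DecidableEq V] (T : SBHTree V)
    (a : V → ℝ) (ha : ∀ v, 0 ≤ a v) :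
    ∃ α β : V → ℝ, T.DualFeasible α β ∧
      (∀ v, ∃ n : ℕ, α v = (n : ℝ)) ∧
      (∀ v, β v = -1 ∨ β v = 0 ∨ β v = 1) ∧
      ∀ α' β' : V → ℝ, T.DualFeasible α' β' →
        (∑ v, a v * β' v) ≤ ∑ v, a v * β v := by
  classical
  set r := T.root with hr
  set p := T.parent with hp
  -- a uniform bound on feasible α
  set N : ℕ := Finset.univ.sup (fun v => Nat.find (T.reaches_root v)) with hN
  -- integer objective
  set Ψ : (V → ℤ) → ℝ := fun m => ∑ v, a v *
      (if v = r then -((m r : ℤ) : ℝ) else min 1 (((m (p v) : ℤ) : ℝ) - ((m v : ℤ) : ℝ))) with hΨ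
  set P : (V → ℤ) → Prop := fun m =>
      (∀ v, 0 ≤ m v) ∧ (∀ v, v ≠ r → m v - 1 ≤ m (p v)) ∧ m r ≤ 1 with hP
  set S : Finset (V → Fin (N+2)) :=
      Finset.univ.filter (fun c => P (fun v => ((c v : ℕ) : ℤ))) with hS
  have hSne : S.Nonempty := by
    refine ⟨fun _ => ⟨0, by omega⟩, ?_⟩
    simp only [hS, Finset.mem_filter, Finset.mem_univ, true_and, hP]
    refine ⟨fun v => by simp, fun v _ => by simp, by simp⟩
  obtain ⟨c, hcS, hcmax⟩ := S.exists_max_image (fun c => Ψ (fun v => ((c v : ℕ) : ℤ))) hSne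
  have hcP : P (fun v => ((c v : ℕ) : ℤ)) := by
    simpa only [hS, Finset.mem_filter, Finset.mem_univ, true_and] using hcS
  obtain ⟨hc0, hc1, hc2⟩ := hcP
  simp only at hc0 hc1 hc2
  have hvol : (MeasureTheory.volume (Set.Ioo (0:ℝ) 1)).toReal = 1 := by
    rw [Real.volume_Ioo]; norm_num
  -- the integral optimal pair
  refine ⟨fun v => ((c v : ℕ) : ℝ),
    fun v => if v = r then -((c r : ℕ) : ℝ) else min 1 (((c (p v) : ℕ) : ℝ) - ((c v : ℕ) : ℝ)),
    ?_, ?_, ?_, ?_⟩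
  · refine ⟨fun v => by positivity, fun v => ?_, fun v hv => ?_, ?_⟩
    · dsimp only
      by_cases h : v = r
      · subst h
        rw [if_pos rfl]
        have h1 : ((c r : ℕ) : ℝ) ≤ 1 := by exact_mod_cast hc2
        have h2 : (0:ℝ) ≤ ((c r : ℕ) : ℝ) := by positivity
        constructor <;> linarith
      · rw [if_neg h]
        have h1 : ((c v : ℕ) : ℝ) - 1 ≤ ((c (p v) : ℕ) : ℝ) := by exact_mod_cast hc1 v h
        refine ⟨le_min (by norm_num) (by linarith), min_le_left _ _⟩
    · dsimp only
      rw [if_neg hv]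
      have := min_le_right (1:ℝ) (((c (p v) : ℕ) : ℝ) - ((c v : ℕ) : ℝ))
      linarith
    · dsimp only
      rw [if_pos rfl]; linarith
  · exact fun v => ⟨(c v : ℕ), rfl⟩
  · intro v
    dsimp only
    by_cases h : v = r
    · subst h
      rw [if_pos rfl]
      have h2 : ((c r : ℕ) : ℤ) ≤ 1 := hc2
      have h3 : ((c r : ℕ) : ℤ) = 0 ∨ ((c r : ℕ) : ℤ) = 1 := by omega
      rcases h3 with h3 | h3
      · right; left
        have h4 : ((c r : ℕ) : ℝ) = 0 := by exact_mod_cast h3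
        rw [h4]; ring
      · left
        have h4 : ((c r : ℕ) : ℝ) = 1 := by exact_mod_cast h3
        rw [h4]
    · rw [if_neg h]
      have h1 : (-1 : ℤ) ≤ ((c (p v) : ℕ) : ℤ) - ((c v : ℕ) : ℤ) := by
        have := hc1 v h; omega
      rcases lt_trichotomy (((c (p v) : ℕ) : ℤ) - ((c v : ℕ) : ℤ)) 0 with hd | hd | hd
      · left
        have hd1 : ((c (p v) : ℕ) : ℤ) - ((c v : ℕ) : ℤ) = -1 := by omega
        have : ((c (p v) : ℕ) : ℝ) - ((c v : ℕ) : ℝ) = -1 := by exact_mod_cast hd1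
        rw [this, min_eq_right (by norm_num)]
      · right; left
        have : ((c (p v) : ℕ) : ℝ) - ((c v : ℕ) : ℝ) = 0 := by exact_mod_cast hd
        rw [this, min_eq_right (by norm_num)]
      · right; right
        have hd1 : (1:ℤ) ≤ ((c (p v) : ℕ) : ℤ) - ((c v : ℕ) : ℤ) := hd
        have : (1:ℝ) ≤ ((c (p v) : ℕ) : ℝ) - ((c v : ℕ) : ℝ) := by exact_mod_cast hd1
        rw [min_eq_left this]
  -- optimality
  · intro α' β' hfeas
    obtain ⟨h1, h2, h3, h4⟩ := hfeas
    have hroot1 : α' r ≤ 1 := by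
      have := (h2 r).1; linarith [h4]
    have hstep : ∀ x, α' x ≤ α' (p x) + 1 := by
      intro x
      by_cases hx : x = r
      · subst hx
        have hpr : p r = r := T.parent_root
        rw [hpr]; linarith
      · have := h3 x hx; have := (h2 x).1; linarith
    have hiter : ∀ n x, α' x ≤ α' (p^[n] x) + n := by
      intro n
      induction n with
      | zero => intro x; simp
      | succ n ih =>
        intro x
        have h5 := ih x
        have h6 := hstep (p^[n] x)
        rw [Function.iterate_succ_apply']
        push_cast
        linarith
    have hbound : ∀ v, α' v ≤ (N : ℝ) + 1 := by
      intro v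
      have hfind := Nat.find_spec (T.reaches_root v)
      have h5 := hiter (Nat.find (T.reaches_root v)) v
      rw [hfind] at h5
      have h6 : Nat.find (T.reaches_root v) ≤ N := by
        rw [hN]
        exact Finset.le_sup (f := fun v => Nat.find (T.reaches_root v)) (Finset.mem_univ v)
      have h7 : (Nat.find (T.reaches_root v) : ℝ) ≤ N := by exact_mod_cast h6
      have h8 : α' r ≤ 1 := hroot1
      rw [hr] at h8
      linarith
    -- the floor function family
    set FF : ℝ → ℝ → ℝ := fun x θ => ((⌊x + θ⌋ : ℤ) : ℝ) with hFF
    have hFI : ∀ x, IntegrableOn (FF x) (Set.Ioo 0 1) := fun x => (aux_floor_integral x).1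
    have hFint : ∀ x, ∫ θ in Set.Ioo (0:ℝ) 1, FF x θ = x := fun x => (aux_floor_integral x).2
    set d : V → ℝ := fun v => α' (p v) - α' v with hd
    set k : V → ℤ := fun v => ⌊d v⌋ with hk
    -- summand of the averaged objective
    set term : V → ℝ → ℝ := fun v θ => a v *
      (if v = r then -(FF (α' r) θ) else
        min 1 ((k v : ℝ)) + (min 1 ((k v : ℝ)+1) - min 1 ((k v : ℝ))) *
          ((FF (α' (p v)) θ - FF (α' v) θ) - (k v : ℝ))) with hterm
    have hTI : ∀ v, IntegrableOn (term v) (Set.Ioo 0 1) := by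
      intro v
      by_cases h : v = r
      · simp only [hterm, h, eq_self_iff_true, if_true]
        exact ((hFI (α' r)).neg.const_mul (a r))
      · simp only [hterm, if_neg h, hFF]
        exact ((aux_combo (α' (p v)) (α' v) _ _ _).1).const_mul (a v)
    have hTval : ∀ v, ∫ θ in Set.Ioo (0:ℝ) 1, term v θ
        = a v * (if v = r then -(α' r) else min 1 (d v)) := by
      intro v
      by_cases h : v = r
      · simp only [hterm, h, eq_self_iff_true, if_true]
        rw [integral_const_mul, integral_neg, hFint]
      · simp only [hterm, if_neg h, hFF]
        rw [integral_const_mul, (aux_combo (α' (p v)) (α' v) _ _ _).2]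
        have hy1 : ((k v : ℝ)) ≤ d v := Int.floor_le _
        have hy2 : d v ≤ (k v : ℝ) + 1 := (Int.lt_floor_add_one _).le
        have hmv := min_affine (k v) (d v) hy1 hy2
        have hdv : α' (p v) - α' v = d v := by rw [hd]
        rw [hdv, hmv]
    -- Step A : bound by the relaxed objective
    have hstepA : (∑ v, a v * β' v) ≤ ∑ v, a v * (if v = r then -(α' r) else min 1 (d v)) := by
      apply Finset.sum_le_sum
      intro v _
      apply mul_le_mul_of_nonneg_left _ (ha v)
      by_cases h : v = r
      · subst h; rw [if_pos rfl]; linarith [h4]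
      · rw [if_neg h]
        exact le_min (h2 v).2 (by have := h3 v h; simp only [hd]; linarith)
    -- Step B : the relaxed objective is the average of G
    have hstepB : ∑ v, a v * (if v = r then -(α' r) else min 1 (d v))
        = ∫ θ in Set.Ioo (0:ℝ) 1, ∑ v, term v θ := by
      rw [integral_finset_sum _ (fun v _ => hTI v)]
      exact Finset.sum_congr rfl (fun v _ => (hTval v).symm)
    -- Step C : pointwise domination by the best integral candidate
    have hstepC : ∀ θ ∈ Set.Ioo (0:ℝ) 1,
        (∑ v, term v θ) ≤ Ψ (fun v => ((c v : ℕ) : ℤ)) := by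
      intro θ hθ
      obtain ⟨hθ0, hθ1⟩ := hθ
      have hfl0 : ∀ v, 0 ≤ ⌊α' v + θ⌋ := by
        intro v
        exact Int.floor_nonneg.mpr (by linarith [h1 v])
      have hflN : ∀ v, ⌊α' v + θ⌋ ≤ (N : ℤ) + 1 := by
        intro v
        have hb := hbound v
        have : (⌊α' v + θ⌋ : ℝ) ≤ α' v + θ := Int.floor_le _
        have h6 : (⌊α' v + θ⌋ : ℝ) < (N : ℝ) + 2 := by linarith
        have h7 : (⌊α' v + θ⌋ : ℤ) < (N : ℤ) + 2 := by exact_mod_cast h6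
        omega
      set cθ : V → Fin (N+2) := fun v => ⟨(⌊α' v + θ⌋).toNat, by
        have := hfl0 v; have := hflN v; omega⟩ with hcθ
      have hcoe : ∀ v, ((cθ v : ℕ) : ℤ) = ⌊α' v + θ⌋ := by
        intro v
        simp only [hcθ]
        exact Int.toNat_of_nonneg (hfl0 v)
      have hmem : cθ ∈ S := by
        simp only [hS, Finset.mem_filter, Finset.mem_univ, true_and, hP]
        refine ⟨fun v => by rw [hcoe]; exact hfl0 v, fun v hv => ?_, ?_⟩
        · rw [hcoe, hcoe]
          have hineq : α' v - 1 ≤ α' (p v) := by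
            have := h3 v hv; have := (h2 v).1; linarith
          have := Int.floor_mono (show α' v + θ - ((1:ℤ):ℝ) ≤ α' (p v) + θ by push_cast; linarith)
          rw [Int.floor_sub_intCast] at this
          omega
        · rw [hcoe]
          have : (⌊α' r + θ⌋ : ℝ) ≤ α' r + θ := Int.floor_le _
          have h6 : (⌊α' r + θ⌋ : ℝ) < 2 := by linarith
          have h7 : (⌊α' r + θ⌋ : ℤ) < 2 := by exact_mod_cast h6
          omega
      have heq1 : (∑ v, term v θ) = ∑ v, a v *
          (if v = r then -((⌊α' r + θ⌋ : ℤ) : ℝ) else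
            min 1 (((⌊α' (p v) + θ⌋ : ℤ) : ℝ) - ((⌊α' v + θ⌋ : ℤ) : ℝ))) := by
        apply Finset.sum_congr rfl
        intro v _
        by_cases h : v = r
        · subst h
          simp only [hterm, hFF, eq_self_iff_true, if_true]
        · simp only [hterm, hFF, if_neg h]
          congr 1
          have hb1 := (floor_diff_bounds (α' (p v)) (α' v) θ).1
          have hb2 := (floor_diff_bounds (α' (p v)) (α' v) θ).2
          have hky : k v = ⌊α' (p v) - α' v⌋ := by rw [hk, hd]
          have hy1 : ((k v : ℝ)) ≤ ((⌊α' (p v) + θ⌋ : ℤ) : ℝ) - ((⌊α' v + θ⌋ : ℤ) : ℝ) := by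
            rw [hky]
            have h9 : (⌊α' (p v) - α' v⌋ : ℝ) ≤ ((⌊α' (p v) + θ⌋ - ⌊α' v + θ⌋ : ℤ) : ℝ) := by
              exact_mod_cast hb1
            push_cast at h9 ⊢; linarith
          have hy2 : ((⌊α' (p v) + θ⌋ : ℤ) : ℝ) - ((⌊α' v + θ⌋ : ℤ) : ℝ) ≤ (k v : ℝ) + 1 := by
            rw [hky]
            have h9 : ((⌊α' (p v) + θ⌋ - ⌊α' v + θ⌋ : ℤ) : ℝ) ≤ ((⌊α' (p v) - α' v⌋ + 1 : ℤ) : ℝ) := by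
              exact_mod_cast hb2
            push_cast at h9 ⊢; linarith
          rw [min_affine (k v) _ hy1 hy2]
      have heq2 : (∑ v, a v *
          (if v = r then -((⌊α' r + θ⌋ : ℤ) : ℝ) else
            min 1 (((⌊α' (p v) + θ⌋ : ℤ) : ℝ) - ((⌊α' v + θ⌋ : ℤ) : ℝ))))
          = Ψ (fun v => ((cθ v : ℕ) : ℤ)) := by
        rw [hΨ]
        apply Finset.sum_congr rfl
        intro v _
        simp only [hcoe]
      rw [heq1, heq2]
      exact hcmax cθ hmem
    -- Step D : conclude
    have hGint : IntegrableOn (fun θ => ∑ v, term v θ) (Set.Ioo (0:ℝ) 1) :=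
      integrable_finset_sum _ (fun v _ => hTI v)
    have hstepD : (∫ θ in Set.Ioo (0:ℝ) 1, ∑ v, term v θ) ≤ Ψ (fun v => ((c v : ℕ) : ℤ)) := by
      have := setIntegral_mono_on hGint
        (integrableOn_const measure_Ioo_lt_top.ne) measurableSet_Ioo hstepC
      rw [setIntegral_const, measureReal_def, hvol, one_smul] at this
      exact this
    have hfinal : Ψ (fun v => ((c v : ℕ) : ℤ)) = ∑ v, a v *
        (if v = r then -((c r : ℕ) : ℝ) else min 1 (((c (p v) : ℕ) : ℝ) - ((c v : ℕ) : ℝ))) := by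
      rw [hΨ]
      apply Finset.sum_congr rfl
      intro v _
      congr 1
    calc (∑ v, a v * β' v) ≤ ∑ v, a v * (if v = r then -(α' r) else min 1 (d v)) := hstepA
      _ = ∫ θ in Set.Ioo (0:ℝ) 1, ∑ v, term v θ := hstepB
      _ ≤ Ψ (fun v => ((c v : ℕ) : ℤ)) := hstepD
      _ = _ := hfinal
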